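/- Let d be an integer with 1 ≤ d < p and let f_d(X) = X^d ∈ F_q[X]. Then for every integer s with d < s ≤ q there exist a subset A ⊆ F_q of size s and a vector c ∈ F_p^s for which T(c, A, f_d) is empty. -/

import Mathlib

open fwdDiff Finset


lemma fd_pow (R : Type*) [CommRing R] (k : ℕ) :
    fwdDiff (1:R) (fun x : R ↦ x ^ k) = fun x ↦ ∑ j ∈ range k, k.choose j • x ^ j := by
  funext x
  have h : (x + 1) ^ k = ∑ j ∈ range (k + 1), k.choose j • x ^ j := by
    rw [add_pow]
    simp [mul_comm, nsmul_eq_mul]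
  simp only [fwdDiff, h, Finset.sum_range_succ, Nat.choose_self, one_smul]
  ring

lemma fd_pow_lt (R : Type*) [CommRing R] : ∀ k n : ℕ, k < n →
    (fwdDiff (1:R))^[n] (fun x : R ↦ x ^ k) = fun _ ↦ 0 := by
  intro k
  induction k using Nat.strong_induction_on with
  | _ k IH =>
    intro n hn
    obtain ⟨m, rfl⟩ : ∃ m, n = m + 1 := ⟨n - 1, by omega⟩
    rw [Function.iterate_succ_apply, fd_pow]
    have : (fun x : R ↦ ∑ j ∈ range k, k.choose j • x ^ j)
        = ∑ j ∈ range k, (k.choose j • fun x : R ↦ x ^ j) := by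
      funext x; simp
    rw [this, fwdDiff_iter_finset_sum]
    refine Finset.sum_eq_zero fun j hj => ?_
    have hjk := mem_range.mp hj
    rw [fwdDiff_iter_const_smul, IH j hjk m (by omega)]
    funext x; simp
  
lemma fd_pow_self (R : Type*) [CommRing R] (d : ℕ) :
    (fwdDiff (1:R))^[d] (fun x : R ↦ x ^ d) = fun _ ↦ (d.factorial : R) := by
  induction d with
  | zero => simp
  | succ d IH =>
    rw [Function.iterate_succ_apply, fd_pow]
    have : (fun x : R ↦ ∑ j ∈ range (d+1), (d+1).choose j • x ^ j)
        = ∑ j ∈ range (d+1), ((d+1).choose j • fun x : R ↦ x ^ j) := by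
      funext x; simp
    rw [this, fwdDiff_iter_finset_sum, Finset.sum_range_succ]
    have hz : ∀ j ∈ range d, (fwdDiff (1:R))^[d] ((d+1).choose j • fun x : R ↦ x ^ j) = 0 := by
      intro j hj
      rw [fwdDiff_iter_const_smul, fd_pow_lt R j d (mem_range.mp hj)]
      funext x; simp
    rw [Finset.sum_eq_zero hz, zero_add, fwdDiff_iter_const_smul, IH]
    funext x
    simp [Nat.choose_succ_self_right, Nat.factorial_succ, mul_comm]



open Polynomial

/-- The Thue–Morse (sum-of-digits) function on `F` with respect to the ordered
basis `B` of `F` over `F_p`. -/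
noncomputable def TM {p r : ℕ} {F : Type*} [Field F] [Algebra (ZMod p) F]
    (B : Module.Basis (Fin r) (ZMod p) F) (ξ : F) : ZMod p :=
  ∑ i, B.repr ξ i

/-- The set `T(c, A, f)` where `A = {α 1, …, α s}` and `c = (c 1, …, c s)`. -/
noncomputable def TSet {p r s : ℕ} {F : Type*} [Field F] [Algebra (ZMod p) F]
    (B : Module.Basis (Fin r) (ZMod p) F) (c : Fin s → ZMod p) (α : Fin s → F)
    (f : Polynomial F) : Set F :=
  {ξ : F | ∀ i, TM B (f.eval (ξ + α i)) = c i}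


noncomputable def TMl {p r : ℕ} {F : Type*} [Field F] [Algebra (ZMod p) F]
    (B : Module.Basis (Fin r) (ZMod p) F) : F →ₗ[ZMod p] ZMod p where
  toFun := TM B
  map_add' x y := by simp [TM, Finset.sum_add_distrib]
  map_smul' a x := by simp [TM, Finset.mul_sum]

theorem stmt4 {p r : ℕ} [Fact p.Prime] (hr : 0 < r)
    {F : Type*} [Field F] [Fintype F] [Algebra (ZMod p) F]
    (hF : Fintype.card F = p ^ r) (B : Module.Basis (Fin r) (ZMod p) F)
    (d : ℕ) (hd1 : 1 ≤ d) (hdp : d < p)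
    (s : ℕ) (hs1 : d < s) (hs2 : s ≤ p ^ r) :
    ∃ α : Fin s → F, Function.Injective α ∧ ∃ c : Fin s → ZMod p,
      TSet B c α (X ^ d : Polynomial F) = ∅ := by
  classical
  haveI : CharP F p := charP_of_injective_algebraMap (algebraMap (ZMod p) F).injective p
  have hcast : Set.InjOn ((↑) : ℕ → F) (Set.Iio p) := CharP.natCast_injOn_Iio F p
  -- the finset of the first d+1 nat casts
  set T : Finset F := (Finset.range (d+1)).image ((↑) : ℕ → F) with hT
  have hTcard : T.card = d + 1 := by
    rw [hT, Finset.card_image_of_injOn, Finset.card_range]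
    intro a ha b hb hab
    exact hcast (by simp at ha ⊢; omega) (by simp at hb ⊢; omega) hab
  have hTc : s - (d+1) ≤ Fintype.card (↥(Tᶜ : Finset F)) := by
    rw [Fintype.card_coe, Finset.card_compl, hTcard, hF]
    omega
  obtain ⟨e⟩ := Function.Embedding.nonempty_of_card_le
    ((Fintype.card_fin _).trans_le hTc)
  -- define α
  set α : Fin s → F := fun i =>
    if h : (i : ℕ) < d + 1 then ((i : ℕ) : F)
    else (e ⟨(i : ℕ) - (d+1), by omega⟩ : F) with hα
  have hmemT : ∀ k : ℕ, k < d + 1 → ((k : ℕ) : F) ∈ T := by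
    intro k hk; exact Finset.mem_image_of_mem _ (Finset.mem_range.mpr hk)
  have hαinj : Function.Injective α := by
    intro i j hij
    rw [hα] at hij
    by_cases hi : (i : ℕ) < d + 1 <;> by_cases hj : (j : ℕ) < d + 1 <;>
      simp only [hi, hj, dif_pos, dif_neg, not_false_iff] at hij
    · exact Fin.ext (hcast (by simpa using lt_of_lt_of_le hi hdp.nat_succ_le)
        (by simpa using lt_of_lt_of_le hj hdp.nat_succ_le) hij)
    · exact absurd (hij ▸ hmemT _ hi) (Finset.mem_compl.mp (e _).2 ∘ id)
    · exact absurd (hij ▸ hmemT _ hj) (Finset.mem_compl.mp (e _).2 ∘ id)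
    · have := e.injective (Subtype.ext hij)
      have := Fin.mk.injEq _ _ _ _ ▸ this
      exact Fin.ext (by omega)
  refine ⟨α, hαinj, ?_⟩
  -- define c
  refine ⟨fun i => if (i : ℕ) = 0 then (-1)^d * ((d.factorial : ZMod p) * TM B 1 + 1) else 0, ?_⟩
  ext ξ
  simp only [Set.mem_empty_iff_false, iff_false, Set.mem_setOf_eq, TSet]
  intro hξ
  -- the key identity
  have key : (fwdDiff (1:F))^[d] (fun x : F ↦ x ^ d) ξ = (d.factorial : F) := by
    rw [fd_pow_self]
  rw [fwdDiff_iter_eq_sum_shift] at key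
  -- apply TM (as TMl)
  have key2 := congrArg (TMl B) key
  rw [map_sum] at key2
  set C0 : ZMod p := (-1)^d * ((d.factorial : ZMod p) * TM B 1 + 1) with hC0
  have hterm : ∀ k ∈ Finset.range (d+1),
      TMl B ((((-1:ℤ)^(d-k) * (d.choose k)) • (ξ + k • (1:F))^d))
        = ((-1:ℤ)^(d-k) * (d.choose k)) • (if k = 0 then C0 else 0) := by
    intro k hk
    have hk' : k < d + 1 := Finset.mem_range.mp hk
    have hks : k < s := by omega
    have hα' : α ⟨k, hks⟩ = (k : F) := by rw [hα]; simp [hk']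
    have hv := hξ ⟨k, hks⟩
    rw [hα'] at hv
    simp only [Polynomial.eval_pow, Polynomial.eval_X] at hv
    rw [map_zsmul]
    have h1 : (k • (1:F)) = (k : F) := by simp
    rw [h1]
    have h2 : TMl B ((ξ + (k:F))^d) = TM B ((ξ + (k:F))^d) := rfl
    rw [h2, hv]
  rw [Finset.sum_congr rfl hterm] at key2
  have hrhs : TMl B ((d.factorial : F)) = (d.factorial : ZMod p) * TM B 1 := by
    have h3 : ((d.factorial : F)) = (d.factorial : ZMod p) • (1:F) := by
      rw [Algebra.smul_def, mul_one, map_natCast]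
    rw [h3, map_smul, smul_eq_mul]; rfl
  rw [hrhs] at key2
  have hsum : ∑ k ∈ Finset.range (d+1),
      ((-1:ℤ)^(d-k) * (d.choose k)) • (if k = 0 then C0 else 0) = ((-1:ℤ)^d) • C0 := by
    rw [Finset.sum_eq_single 0]
    · simp
    · intro b _ hb0; simp [hb0]
    · intro h; exact absurd (Finset.mem_range.mpr (by omega)) h
  rw [hsum, hC0] at key2
  have hneg : ((-1:ℤ)^d) • ((-1:ZMod p)^d * ((d.factorial : ZMod p) * TM B 1 + 1))
      = (d.factorial : ZMod p) * TM B 1 + 1 := by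
    rw [zsmul_eq_mul, ← mul_assoc]
    push_cast
    rw [← mul_pow]
    simp
  rw [hneg] at key2
  have : (1 : ZMod p) = 0 := by linear_combination key2
  exact one_ne_zero this
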